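/- The curvature of the curve {(x,y) ∈ R² : e^x + e^y = 1}, parametrized by x = 2 log(cos θ), y = 2 log(sin θ), θ ∈ (0, π/2), equals c_∞(θ) = (sin θ cos θ)² / [(cos θ)⁴ + (sin θ)⁴]^{3/2}, and this function is strictly increasing on (0, π/4). -/

import Mathlib

open Real Filter Topology

/-- Curvature of the `p = ∞` (logarithmic) embedding. -/
noncomputable def cInf (θ : ℝ) : ℝ :=
  (Real.sin θ * Real.cos θ) ^ 2 /
    ((Real.cos θ) ^ 4 + (Real.sin θ) ^ 4) ^ ((3 : ℝ) / 2)

lemma derivX (t : ℝ) (h : Real.cos t ≠ 0) :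
    deriv (fun t => 2 * Real.log (Real.cos t)) t = -2 * Real.tan t := by
  have h1 : HasDerivAt (fun t => 2 * Real.log (Real.cos t))
      (2 * (-Real.sin t / Real.cos t)) t := ((Real.hasDerivAt_cos t).log h).const_mul 2
  rw [h1.deriv, Real.tan_eq_sin_div_cos]; ring

lemma derivY (t : ℝ) (h : Real.sin t ≠ 0) :
    deriv (fun t => 2 * Real.log (Real.sin t)) t = 2 * Real.cos t / Real.sin t := by
  have h1 : HasDerivAt (fun t => 2 * Real.log (Real.sin t))
      (2 * (Real.cos t / Real.sin t)) t := ((Real.hasDerivAt_sin t).log h).const_mul 2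
  rw [h1.deriv]; ring

lemma derivX2 (θ : ℝ) (h : Real.cos θ ≠ 0) :
    deriv (deriv (fun t => 2 * Real.log (Real.cos t))) θ = -2 / Real.cos θ ^ 2 := by
  have hev : deriv (fun t => 2 * Real.log (Real.cos t)) =ᶠ[𝓝 θ]
      fun t => -2 * Real.tan t := by
    filter_upwards [Real.continuous_cos.continuousAt.eventually_ne h] with t ht
      using derivX t ht
  rw [hev.deriv_eq]
  have h2 : HasDerivAt (fun t => -2 * Real.tan t) (-2 * (1 / Real.cos θ ^ 2)) θ :=
    (Real.hasDerivAt_tan h).const_mul (-2)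
  rw [h2.deriv]; ring

lemma derivY2 (θ : ℝ) (h : Real.sin θ ≠ 0) :
    deriv (deriv (fun t => 2 * Real.log (Real.sin t))) θ = -2 / Real.sin θ ^ 2 := by
  have hev : deriv (fun t => 2 * Real.log (Real.sin t)) =ᶠ[𝓝 θ]
      fun t => 2 * Real.cos t / Real.sin t := by
    filter_upwards [Real.continuous_sin.continuousAt.eventually_ne h] with t ht
      using derivY t ht
  rw [hev.deriv_eq]
  have h2 : HasDerivAt (fun t => 2 * Real.cos t / Real.sin t)
      ((2 * -Real.sin θ * Real.sin θ - 2 * Real.cos θ * Real.cos θ) / Real.sin θ ^ 2) θ :=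
    ((Real.hasDerivAt_cos θ).const_mul 2).div (Real.hasDerivAt_sin θ) h
  rw [h2.deriv]
  have hsq := Real.sin_sq_add_cos_sq θ
  field_simp
  nlinarith [hsq]

lemma sq_rpow_three_halves (x : ℝ) (hx : 0 ≤ x) : (x ^ 2) ^ ((3 : ℝ) / 2) = x ^ 3 := by
  rw [← Real.rpow_natCast x 2, ← Real.rpow_mul hx, ← Real.rpow_natCast x 3]
  norm_num

lemma cInf_eq (θ : ℝ) :
    cInf θ = (Real.sin (2 * θ) ^ 2 / 4) /
      ((1 - Real.sin (2 * θ) ^ 2 / 2) ^ ((3 : ℝ) / 2)) := by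
  unfold cInf
  rw [Real.sin_two_mul]
  have h1 : (2 * Real.sin θ * Real.cos θ) ^ 2 / 4 = (Real.sin θ * Real.cos θ) ^ 2 := by ring
  have h2 : 1 - (2 * Real.sin θ * Real.cos θ) ^ 2 / 2 = Real.cos θ ^ 4 + Real.sin θ ^ 4 := by
    nlinarith [Real.sin_sq_add_cos_sq θ]
  rw [h1, h2]

/-- The curvature of the curve `eˣ + eʸ = 1`, parametrized by `x = 2 log (cos θ)`,
`y = 2 log (sin θ)`, equals `c_∞`, which is strictly increasing on `(0, π/4)`. -/
theorem curvature_log_embedding :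
    (∀ θ ∈ Set.Ioo 0 (π / 2),
        |deriv (fun t => 2 * Real.log (Real.cos t)) θ *
            deriv (deriv (fun t => 2 * Real.log (Real.sin t))) θ -
          deriv (deriv (fun t => 2 * Real.log (Real.cos t))) θ *
            deriv (fun t => 2 * Real.log (Real.sin t)) θ| /
          ((deriv (fun t => 2 * Real.log (Real.cos t)) θ) ^ 2 +
            (deriv (fun t => 2 * Real.log (Real.sin t)) θ) ^ 2) ^ ((3 : ℝ) / 2) =
        cInf θ) ∧
    StrictMonoOn cInf (Set.Ioo 0 (π / 4)) := by
  constructor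
  · intro θ hθ
    obtain ⟨hθ0, hθ2⟩ := hθ
    have hs : 0 < Real.sin θ := Real.sin_pos_of_pos_of_lt_pi hθ0 (by linarith [Real.pi_pos])
    have hc : 0 < Real.cos θ := Real.cos_pos_of_mem_Ioo ⟨by linarith [Real.pi_pos], hθ2⟩
    set s := Real.sin θ with hs_def
    set c := Real.cos θ with hc_def
    rw [derivX θ (ne_of_gt hc), derivY θ (ne_of_gt hs), derivX2 θ (ne_of_gt hc),
        derivY2 θ (ne_of_gt hs)]
    have htan : Real.tan θ = s / c := Real.tan_eq_sin_div_cos θ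
    have hnum : -2 * Real.tan θ * (-2 / s ^ 2) - -2 / c ^ 2 * (2 * c / s) = 8 / (s * c) := by
      rw [htan]; field_simp; ring
    have hden : (-2 * Real.tan θ) ^ 2 + (2 * c / s) ^ 2 = 4 * (c ^ 4 + s ^ 4) / (s * c) ^ 2 := by
      rw [htan]; field_simp; ring
    rw [hnum, hden, abs_of_pos (by positivity)]
    have hcs : (0:ℝ) < s * c := by positivity
    have hX : (0:ℝ) ≤ c ^ 4 + s ^ 4 := by positivity
    have hrw : (4 * (c ^ 4 + s ^ 4) / (s * c) ^ 2) ^ ((3 : ℝ) / 2) =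
        8 * (c ^ 4 + s ^ 4) ^ ((3 : ℝ) / 2) / (s * c) ^ 3 := by
      rw [Real.div_rpow (by positivity) (by positivity),
          Real.mul_rpow (by norm_num) hX, sq_rpow_three_halves _ hcs.le,
          show (4:ℝ) = 2 ^ 2 by norm_num, sq_rpow_three_halves 2 (by norm_num)]
      norm_num
    rw [hrw]
    unfold cInf
    rw [← hs_def, ← hc_def]
    have hA : (0:ℝ) < (c ^ 4 + s ^ 4) ^ ((3 : ℝ) / 2) :=
      Real.rpow_pos_of_pos (by positivity) _
    field_simp
  · intro θ₁ h₁ θ₂ h₂ hlt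
    obtain ⟨h₁0, h₁4⟩ := h₁
    obtain ⟨h₂0, h₂4⟩ := h₂
    have hpi := Real.pi_pos
    have hm : Real.sin (2 * θ₁) < Real.sin (2 * θ₂) := by
      apply Real.strictMonoOn_sin ⟨by linarith, by linarith⟩ ⟨by linarith, by linarith⟩
      linarith
    have hs1 : 0 < Real.sin (2 * θ₁) :=
      Real.sin_pos_of_pos_of_lt_pi (by linarith) (by linarith)
    have hs2 : 0 < Real.sin (2 * θ₂) := by linarith
    have hb1 : Real.sin (2 * θ₂) ^ 2 ≤ 1 := Real.sin_sq_le_one _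
    set a := Real.sin (2 * θ₁) ^ 2 with ha_def
    set b := Real.sin (2 * θ₂) ^ 2 with hb_def
    have hab : a < b := by
      apply pow_lt_pow_left₀ hm hs1.le
      norm_num
    have ha0 : 0 < a := by positivity
    have hD2pos : (0:ℝ) < (1 - b / 2) ^ ((3 : ℝ) / 2) :=
      Real.rpow_pos_of_pos (by linarith) _
    have hD1pos : (0:ℝ) < (1 - a / 2) ^ ((3 : ℝ) / 2) :=
      Real.rpow_pos_of_pos (by linarith) _
    have hDle : (1 - b / 2) ^ ((3 : ℝ) / 2) ≤ (1 - a / 2) ^ ((3 : ℝ) / 2) :=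
      Real.rpow_le_rpow (by linarith) (by linarith) (by norm_num)
    rw [cInf_eq θ₁, cInf_eq θ₂, ← ha_def, ← hb_def]
    calc a / 4 / (1 - a / 2) ^ ((3 : ℝ) / 2)
        < b / 4 / (1 - a / 2) ^ ((3 : ℝ) / 2) :=
          (div_lt_div_iff_of_pos_right hD1pos).mpr (by linarith)
      _ ≤ b / 4 / (1 - b / 2) ^ ((3 : ℝ) / 2) := by
          apply div_le_div_of_nonneg_left (by linarith) hD2pos hDle
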